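/- (Existence and uniqueness for the three-phase Stefan problem with Dirichlet condition, reduced form.) Assume α₂ > α₃ and A > B. Then there exists a unique μ₁ > z₀ such that Q(μ₁) = V(μ₂), where μ₂ ≥ 0 is the unique number satisfying erf(μ₂·√(α₁/α₂)) = H(μ₁). -/

import Mathlib

noncomputable section

/-- The error function `erf x = (2/√π) ∫₀ˣ exp(−s²) ds`. -/
def erf (x : ℝ) : ℝ := (2 / Real.sqrt Real.pi) * ∫ s in (0:ℝ)..x, Real.exp (-(s^2))

/-- The complementary error function. -/
def erfc (x : ℝ) : ℝ := 1 - erf x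

/-- Physical data of the three-phase Stefan problem: positive thermal conductivities,
specific heats, mass density, latent heats, and temperatures `B > C > D`. -/
structure Params where
  k₁ : ℝ
  k₂ : ℝ
  k₃ : ℝ
  c₁ : ℝ
  c₂ : ℝ
  c₃ : ℝ
  ρ : ℝ
  ℓ₁ : ℝ
  ℓ₂ : ℝ
  B : ℝ
  C : ℝ
  D : ℝ
  hk₁ : 0 < k₁
  hk₂ : 0 < k₂
  hk₃ : 0 < k₃
  hc₁ : 0 < c₁
  hc₂ : 0 < c₂
  hc₃ : 0 < c₃
  hρ : 0 < ρ
  hℓ₁ : 0 < ℓ₁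
  hℓ₂ : 0 < ℓ₂
  hBC : C < B
  hCD : D < C

namespace Params

/-- Thermal diffusivity of phase 1. -/
def α₁ (p : Params) : ℝ := p.k₁ / (p.ρ * p.c₁)

/-- Thermal diffusivity of phase 2. -/
def α₂ (p : Params) : ℝ := p.k₂ / (p.ρ * p.c₂)

/-- Thermal diffusivity of phase 3. -/
def α₃ (p : Params) : ℝ := p.k₃ / (p.ρ * p.c₃)

/-- Stefan number `Ste₁ = c₁(C−D)/ℓ₁`. -/
def Ste₁ (p : Params) : ℝ := p.c₁ * (p.C - p.D) / p.ℓ₁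

/-- Stefan number `Ste₂ = c₂(B−C)/ℓ₂`. -/
def Ste₂ (p : Params) : ℝ := p.c₂ * (p.B - p.C) / p.ℓ₂

/-- `φ(z) = z + (Ste₁/√π) exp(−z²)/erfc(z)`. -/
def φ (p : Params) (z : ℝ) : ℝ :=
  z + (p.Ste₁ / Real.sqrt Real.pi) * Real.exp (-(z^2)) / erfc z

/-- `H(z) = erf(z√(α₁/α₂)) − (Ste₂/√π)(ℓ₂/ℓ₁)√(k₂c₁/(k₁c₂)) exp(−z²α₁/α₂)/φ(z)`. -/
def H (p : Params) (z : ℝ) : ℝ :=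
  erf (z * Real.sqrt (p.α₁ / p.α₂)) -
    (p.Ste₂ / Real.sqrt Real.pi) * (p.ℓ₂ / p.ℓ₁) *
      Real.sqrt (p.k₂ * p.c₁ / (p.k₁ * p.c₂)) *
      (Real.exp (-(z^2) * (p.α₁ / p.α₂)) / p.φ z)

/-- `Q(z) = (ℓ₁/ℓ₂) φ(z) exp(z² α₁/α₂)`. -/
def Q (p : Params) (z : ℝ) : ℝ :=
  (p.ℓ₁ / p.ℓ₂) * p.φ z * Real.exp (z^2 * (p.α₁ / p.α₂))

/-- The function `T` arising from the Robin (convective) boundary condition with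
heat-transfer coefficient `h₀` and bulk temperature `Ainf`. -/
def T (p : Params) (h₀ Ainf : ℝ) (z : ℝ) : ℝ :=
  (p.Ste₂ / (Real.sqrt Real.pi * p.c₂)) * ((Ainf - p.B) / (p.B - p.C)) *
    Real.sqrt (p.k₃ * p.c₁ * p.c₃ / p.k₁) *
    (Real.exp (-(z^2) * p.α₁ * (1 / p.α₃ - 1 / p.α₂)) /
      (p.k₃ / (h₀ * Real.sqrt (Real.pi * p.α₃)) + erf (z * Real.sqrt (p.α₁ / p.α₃)))) -
  z * Real.exp (z^2 * (p.α₁ / p.α₂))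

/-- The function `V` arising from the Dirichlet boundary condition with temperature `A`. -/
def V (p : Params) (A : ℝ) (z : ℝ) : ℝ :=
  ((A - p.B) / p.ℓ₂) * Real.sqrt (p.c₁ * p.c₃ * p.k₃ / (Real.pi * p.k₁)) *
    (Real.exp (-(z^2) * (p.α₁ / p.α₃ - p.α₁ / p.α₂)) / erf (z * Real.sqrt (p.α₁ / p.α₃))) -
  z * Real.exp (z^2 * (p.α₁ / p.α₂))

/-- The function `P` arising from the Neumann boundary condition with flux coefficient `q₀`. -/
def P (p : Params) (q₀ : ℝ) (z : ℝ) : ℝ :=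
  Real.exp (z^2 * (p.α₁ / p.α₂)) *
    (-z + (q₀ / p.ℓ₂) * Real.sqrt (p.c₁ / (p.ρ * p.k₁)) * Real.exp (-(z^2) * (p.α₁ / p.α₃)))

/-- Critical heat-transfer coefficient `h₂`. -/
def h2 (p : Params) (Ainf z₀ : ℝ) : ℝ :=
  ((p.B - p.C) / (Ainf - p.B)) *
    Real.sqrt (p.k₂ * p.k₃ * p.c₂ / (Real.pi * p.c₃ * p.α₃)) *
    (1 / erf (z₀ * Real.sqrt (p.α₁ / p.α₂)))

/-- Critical heat-flux coefficient `q₂`. -/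
def q2 (p : Params) (z₀ : ℝ) : ℝ :=
  p.k₂ * (p.B - p.C) / (Real.sqrt (p.α₂ * Real.pi) * erf (z₀ * Real.sqrt (p.α₁ / p.α₂)))

end Params


namespace StefanAux

open MeasureTheory Set Filter

lemma integrable_gauss : Integrable (fun s : ℝ => Real.exp (-(s^2))) := by
  have := integrable_exp_neg_mul_sq (b := 1) one_pos
  simpa using this

lemma intInt (a b : ℝ) : IntervalIntegrable (fun s : ℝ => Real.exp (-(s^2))) volume a b :=
  integrable_gauss.intervalIntegrable

lemma sqrt_pi_pos : 0 < Real.sqrt Real.pi := Real.sqrt_pos.mpr Real.pi_pos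

lemma continuous_erf : Continuous erf := by
  unfold erf
  exact continuous_const.mul (intervalIntegral.continuous_primitive intInt 0)

lemma erf_zero : erf 0 = 0 := by simp [erf]

lemma strictMono_erf : StrictMono erf := by
  intro a b hab
  unfold erf
  have hsplit : (∫ s in (0:ℝ)..a, Real.exp (-(s^2))) + (∫ s in a..b, Real.exp (-(s^2)))
      = ∫ s in (0:ℝ)..b, Real.exp (-(s^2)) :=
    intervalIntegral.integral_add_adjacent_intervals (intInt 0 a) (intInt a b)
  have hpos : 0 < ∫ s in a..b, Real.exp (-(s^2)) :=
    intervalIntegral.intervalIntegral_pos_of_pos (intInt a b) (fun x => Real.exp_pos _) hab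
  have h2 : (0:ℝ) < 2 / Real.sqrt Real.pi := by positivity
  have : (∫ s in (0:ℝ)..a, Real.exp (-(s^2))) < ∫ s in (0:ℝ)..b, Real.exp (-(s^2)) := by
    linarith
  exact mul_lt_mul_of_pos_left this h2

/-- tail integral -/
def I (z : ℝ) : ℝ := ∫ s in Ioi z, Real.exp (-(s^2))

lemma I_pos (z : ℝ) : 0 < I z := by
  rw [I, setIntegral_pos_iff_support_of_nonneg_ae]
  · have : Function.support (fun s : ℝ => Real.exp (-(s^2))) = univ := by
      ext x; simp [Function.support, (Real.exp_pos _).ne']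
    rw [this, univ_inter]
    simp [Real.volume_Ioi]
  · filter_upwards with x using (Real.exp_pos _).le
  · exact integrable_gauss.integrableOn

lemma I_zero : I 0 = Real.sqrt Real.pi / 2 := by
  have := integral_gaussian_Ioi 1
  simpa [I] using this

lemma I_split {z : ℝ} (hz : 0 ≤ z) :
    I 0 = (∫ s in (0:ℝ)..z, Real.exp (-(s^2))) + I z := by
  rw [intervalIntegral.integral_of_le hz, I, I]
  rw [← setIntegral_union (Set.Ioc_disjoint_Ioi le_rfl) measurableSet_Ioi
      integrable_gauss.integrableOn integrable_gauss.integrableOn,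
    Set.Ioc_union_Ioi_eq_Ioi hz]

lemma two_div_sqrt_pi_mul : (2 / Real.sqrt Real.pi) * (Real.sqrt Real.pi / 2) = 1 := by
  field_simp

lemma erf_lt_one (x : ℝ) : erf x < 1 := by
  rcases le_or_gt x 0 with hx | hx
  · have : erf x ≤ erf 0 := strictMono_erf.monotone hx
    rw [erf_zero] at this; linarith
  · have hsplit := I_split hx.le
    have h2 : (0:ℝ) < 2 / Real.sqrt Real.pi := by positivity
    have : erf x = (2 / Real.sqrt Real.pi) * (I 0 - I x) := by
      rw [erf]; rw [hsplit]; ring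
    rw [this]
    calc (2 / Real.sqrt Real.pi) * (I 0 - I x) < (2 / Real.sqrt Real.pi) * I 0 := by
          have := I_pos x
          apply mul_lt_mul_of_pos_left _ h2
          linarith
      _ = 1 := by rw [I_zero]; exact two_div_sqrt_pi_mul

lemma erfc_pos (x : ℝ) : 0 < erfc x := by
  have := erf_lt_one x; simp [erfc]; linarith

lemma erf_pos {x : ℝ} (hx : 0 < x) : 0 < erf x := by
  have := strictMono_erf hx
  rwa [erf_zero] at this

lemma erf_nonneg {x : ℝ} (hx : 0 ≤ x) : 0 ≤ erf x := by
  rcases hx.eq_or_lt with h | h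
  · simp [← h, erf_zero]
  · exact (erf_pos h).le

lemma tendsto_erf : Tendsto erf atTop (nhds 1) := by
  have h1 : Tendsto (fun b : ℝ => ∫ s in (0:ℝ)..b, Real.exp (-(s^2))) atTop (nhds (I 0)) :=
    intervalIntegral_tendsto_integral_Ioi 0 integrable_gauss.integrableOn tendsto_id
  have h2 := h1.const_mul (2 / Real.sqrt Real.pi)
  rw [I_zero, two_div_sqrt_pi_mul] at h2
  exact h2

lemma erf_surj {y : ℝ} (h0 : 0 ≤ y) (h1 : y < 1) : ∃ x, 0 ≤ x ∧ erf x = y := by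
  have hev : ∀ᶠ x in atTop, y < erf x := tendsto_erf.eventually (eventually_gt_nhds h1)
  obtain ⟨b, hb⟩ := hev.exists
  have hb0 : 0 ≤ b := by
    by_contra h
    push_neg at h
    have : erf b ≤ erf 0 := strictMono_erf.monotone h.le
    rw [erf_zero] at this; linarith
  have := intermediate_value_Icc hb0 continuous_erf.continuousOn
  have hy : y ∈ Icc (erf 0) (erf b) := by
    rw [erf_zero]; exact ⟨h0, hb.le⟩
  obtain ⟨x, hx, hfx⟩ := this hy
  exact ⟨x, hx.1, hfx⟩


/-- `G z = ∫_{Ioi 0} exp(-u² - 2uz)`. -/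
def G (z : ℝ) : ℝ := ∫ u in Ioi (0:ℝ), Real.exp (-(u^2) - 2*u*z)

lemma I_shift (z : ℝ) : I z = Real.exp (-(z^2)) * G z := by
  have h := (measurePreserving_add_right volume z).setIntegral_preimage_emb
      (MeasurableEquiv.addRight z).measurableEmbedding
      (fun s => Real.exp (-(s^2))) (Ioi z)
  have hpre : (fun x : ℝ => x + z) ⁻¹' Ioi z = Ioi (0:ℝ) := by ext x; simp
  have h1 : I z = ∫ u in Ioi (0:ℝ), Real.exp (-((u+z)^2)) := by
    rw [I, ← h, hpre]
  rw [h1, G, ← integral_const_mul]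
  congr 1; ext u
  rw [← Real.exp_add]; ring_nf

lemma integrable_G (z : ℝ) :
    IntegrableOn (fun u : ℝ => Real.exp (-(u^2) - 2*u*z)) (Ioi 0) := by
  have heq : (fun u : ℝ => Real.exp (-(u^2) - 2*u*z))
      = fun u : ℝ => Real.exp (z^2) * Real.exp (-((u+z)^2)) := by
    ext u; rw [← Real.exp_add]; ring_nf
  rw [heq]
  exact ((integrable_gauss.comp_add_right z).integrableOn).const_mul _

lemma G_pos (z : ℝ) : 0 < G z := by
  have h := I_pos z
  rw [I_shift z] at h
  nlinarith [Real.exp_pos (-(z^2))]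

lemma G_antitone {a b : ℝ} (ha : 0 ≤ a) (hab : a ≤ b) : G b ≤ G a := by
  apply setIntegral_mono_on (integrable_G b) (integrable_G a) measurableSet_Ioi
  intro u hu
  have hu' : 0 < u := hu
  apply Real.exp_le_exp.mpr
  nlinarith

lemma erfc_eq {z : ℝ} (hz : 0 ≤ z) : erfc z = (2 / Real.sqrt Real.pi) * I z := by
  have h1 : (1:ℝ) = (2 / Real.sqrt Real.pi) * I 0 := by
    rw [I_zero, two_div_sqrt_pi_mul]
  rw [erfc, erf, h1, I_split hz]
  ring

lemma ratio_mono : MonotoneOn (fun z : ℝ => Real.exp (-(z^2)) / erfc z) (Ici 0) := by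
  intro a ha b hb hab
  simp only
  rw [erfc_eq ha, erfc_eq hb, I_shift a, I_shift b]
  have key : ∀ x g : ℝ, 0 < g →
      Real.exp x / (2 / Real.sqrt Real.pi * (Real.exp x * g)) = Real.sqrt Real.pi / 2 / g := by
    intro x g hg
    have := Real.exp_pos x
    have := sqrt_pi_pos
    field_simp
  rw [key _ _ (G_pos a), key _ _ (G_pos b)]
  have hG := G_antitone ha hab
  have := G_pos b
  gcongr



open Classical in
def erfinv (y : ℝ) : ℝ := if h : ∃ x, 0 ≤ x ∧ erf x = y then h.choose else 0

lemma erfinv_spec {y : ℝ} (h0 : 0 ≤ y) (h1 : y < 1) :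
    0 ≤ erfinv y ∧ erf (erfinv y) = y := by
  have h := erf_surj h0 h1
  rw [erfinv, dif_pos h]
  exact h.choose_spec

variable (p : Params)

lemma alpha1_pos : 0 < p.α₁ := div_pos p.hk₁ (mul_pos p.hρ p.hc₁)
lemma alpha2_pos : 0 < p.α₂ := div_pos p.hk₂ (mul_pos p.hρ p.hc₂)
lemma alpha3_pos : 0 < p.α₃ := div_pos p.hk₃ (mul_pos p.hρ p.hc₃)

lemma r_pos : 0 < p.α₁ / p.α₂ := div_pos (alpha1_pos p) (alpha2_pos p)
lemma s_pos : 0 < p.α₁ / p.α₃ := div_pos (alpha1_pos p) (alpha3_pos p)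

lemma r_lt_s (hα : p.α₃ < p.α₂) : p.α₁ / p.α₂ < p.α₁ / p.α₃ :=
  div_lt_div_of_pos_left (alpha1_pos p) (alpha3_pos p) hα

lemma Ste₁_pos : 0 < p.Ste₁ :=
  div_pos (mul_pos p.hc₁ (sub_pos.mpr p.hCD)) p.hℓ₁

lemma Ste₂_pos : 0 < p.Ste₂ :=
  div_pos (mul_pos p.hc₂ (sub_pos.mpr p.hBC)) p.hℓ₂

lemma phi_eq (z : ℝ) :
    p.φ z = z + (p.Ste₁ / Real.sqrt Real.pi) * (Real.exp (-(z^2)) / erfc z) := by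
  rw [Params.φ, mul_div_assoc]

lemma phi_pos {z : ℝ} (hz : 0 ≤ z) : 0 < p.φ z := by
  rw [phi_eq]
  have h1 : 0 < p.Ste₁ / Real.sqrt Real.pi := div_pos (Ste₁_pos p) sqrt_pi_pos
  have h2 : 0 < Real.exp (-(z^2)) / erfc z := div_pos (Real.exp_pos _) (erfc_pos z)
  positivity

lemma phi_ge (z : ℝ) : z ≤ p.φ z := by
  rw [phi_eq]
  have h1 : 0 ≤ p.Ste₁ / Real.sqrt Real.pi := (div_pos (Ste₁_pos p) sqrt_pi_pos).le
  have h2 : 0 ≤ Real.exp (-(z^2)) / erfc z := (div_pos (Real.exp_pos _) (erfc_pos z)).le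
  nlinarith

lemma phi_strictMono : StrictMonoOn p.φ (Ici 0) := by
  intro a ha b hb hab
  rw [phi_eq, phi_eq]
  have h1 : 0 ≤ p.Ste₁ / Real.sqrt Real.pi := (div_pos (Ste₁_pos p) sqrt_pi_pos).le
  have h2 := ratio_mono ha hb hab.le
  have := mul_le_mul_of_nonneg_left h2 h1
  linarith

lemma phi_continuous : Continuous p.φ := by
  unfold Params.φ
  exact continuous_id.add ((continuous_const.mul
    (Real.continuous_exp.comp (continuous_pow 2).neg)).div
    (continuous_const.sub continuous_erf) (fun z => (erfc_pos z).ne'))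

/-- the positive constant in `H` -/
lemma HK_pos : 0 < (p.Ste₂ / Real.sqrt Real.pi) * (p.ℓ₂ / p.ℓ₁) *
    Real.sqrt (p.k₂ * p.c₁ / (p.k₁ * p.c₂)) := by
  have h1 := Ste₂_pos p
  have h2 := sqrt_pi_pos
  have h3 : 0 < p.k₂ * p.c₁ / (p.k₁ * p.c₂) :=
    div_pos (mul_pos p.hk₂ p.hc₁) (mul_pos p.hk₁ p.hc₂)
  exact mul_pos (mul_pos (div_pos h1 h2) (div_pos p.hℓ₂ p.hℓ₁)) (Real.sqrt_pos.mpr h3)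

lemma H_strictMono : StrictMonoOn p.H (Ioi 0) := by
  intro a ha b hb hab
  have ha' : (0:ℝ) < a := ha
  have hb' : (0:ℝ) < b := hb
  unfold Params.H
  have hsq : 0 < Real.sqrt (p.α₁ / p.α₂) := Real.sqrt_pos.mpr (r_pos p)
  have h1 : erf (a * Real.sqrt (p.α₁ / p.α₂)) < erf (b * Real.sqrt (p.α₁ / p.α₂)) :=
    strictMono_erf (mul_lt_mul_of_pos_right hab hsq)
  have hExp : Real.exp (-(b^2) * (p.α₁ / p.α₂)) < Real.exp (-(a^2) * (p.α₁ / p.α₂)) := by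
    apply Real.exp_lt_exp.mpr
    have hr := r_pos p
    nlinarith [mul_pos (mul_pos (sub_pos.mpr hab) (show (0:ℝ) < a + b by linarith)) hr]
  have hphi : p.φ a ≤ p.φ b := ((phi_strictMono p) ha'.le hb'.le hab).le
  have hpa : 0 < p.φ a := phi_pos p ha'.le
  have h2 : Real.exp (-(b^2) * (p.α₁ / p.α₂)) / p.φ b
      < Real.exp (-(a^2) * (p.α₁ / p.α₂)) / p.φ a :=
    calc Real.exp (-(b^2) * (p.α₁ / p.α₂)) / p.φ b
        ≤ Real.exp (-(b^2) * (p.α₁ / p.α₂)) / p.φ a := by gcongr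
      _ < Real.exp (-(a^2) * (p.α₁ / p.α₂)) / p.φ a := by
          apply div_lt_div_of_pos_right hExp hpa
  have h3 := mul_lt_mul_of_pos_left h2 (HK_pos p)
  linarith

lemma H_lt_one {z : ℝ} (hz : 0 ≤ z) : p.H z < 1 := by
  unfold Params.H
  have h1 := erf_lt_one (z * Real.sqrt (p.α₁ / p.α₂))
  have h2 : 0 < (p.Ste₂ / Real.sqrt Real.pi) * (p.ℓ₂ / p.ℓ₁) *
      Real.sqrt (p.k₂ * p.c₁ / (p.k₁ * p.c₂)) *
      (Real.exp (-(z^2) * (p.α₁ / p.α₂)) / p.φ z) :=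
    mul_pos (HK_pos p) (div_pos (Real.exp_pos _) (phi_pos p hz))
  linarith

lemma H_continuousOn : ContinuousOn p.H (Ici 0) := by
  unfold Params.H
  apply ContinuousOn.sub
  · exact (continuous_erf.comp (continuous_id.mul continuous_const)).continuousOn
  · apply ContinuousOn.mul continuousOn_const
    apply ContinuousOn.div
    · exact (Real.continuous_exp.comp ((continuous_pow 2).neg.mul continuous_const)).continuousOn
    · exact (phi_continuous p).continuousOn
    · exact fun z hz => (phi_pos p hz).ne'

lemma Q_continuous : Continuous p.Q := by
  unfold Params.Q
  exact (continuous_const.mul (phi_continuous p)).mul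
    (Real.continuous_exp.comp ((continuous_pow 2).mul continuous_const))

lemma Q_pos {z : ℝ} (hz : 0 ≤ z) : 0 < p.Q z := by
  unfold Params.Q
  exact mul_pos (mul_pos (div_pos p.hℓ₁ p.hℓ₂) (phi_pos p hz)) (Real.exp_pos _)

lemma Q_strictMono : StrictMonoOn p.Q (Ici 0) := by
  intro a ha b hb hab
  have ha' : (0:ℝ) ≤ a := ha
  unfold Params.Q
  have h1 : p.φ a < p.φ b := phi_strictMono p ha hb hab
  have h2 : Real.exp (a^2 * (p.α₁ / p.α₂)) < Real.exp (b^2 * (p.α₁ / p.α₂)) := by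
    apply Real.exp_lt_exp.mpr
    have hr := r_pos p
    nlinarith [mul_pos (mul_pos (sub_pos.mpr hab) (show (0:ℝ) < a + b by nlinarith)) hr]
  have hc : 0 < p.ℓ₁ / p.ℓ₂ := div_pos p.hℓ₁ p.hℓ₂
  have hpa : 0 < p.φ a := phi_pos p ha
  apply mul_lt_mul'' (by exact (mul_lt_mul_of_pos_left h1 hc)) h2
  · positivity
  · positivity

lemma Q_ge {z : ℝ} (hz : 0 ≤ z) : p.ℓ₁ / p.ℓ₂ * z ≤ p.Q z := by
  unfold Params.Q
  have h1 : z ≤ p.φ z := phi_ge p z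
  have h2 : (1:ℝ) ≤ Real.exp (z^2 * (p.α₁ / p.α₂)) := by
    rw [← Real.exp_zero]
    apply Real.exp_le_exp.mpr
    have := r_pos p
    positivity
  have hc : 0 < p.ℓ₁ / p.ℓ₂ := div_pos p.hℓ₁ p.hℓ₂
  have hphi : 0 < p.φ z := phi_pos p hz
  nlinarith [mul_le_mul_of_nonneg_left h1 hc.le,
    mul_le_mul_of_nonneg_left h2 (mul_pos hc hphi).le]

section V
variable (A : ℝ)

lemma Kv_pos (hA : p.B < A) : 0 < (A - p.B) / p.ℓ₂ * Real.sqrt (p.c₁ * p.c₃ * p.k₃ / (Real.pi * p.k₁)) := by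
  have h1 : 0 < p.c₁ * p.c₃ * p.k₃ / (Real.pi * p.k₁) :=
    div_pos (mul_pos (mul_pos p.hc₁ p.hc₃) p.hk₃) (mul_pos Real.pi_pos p.hk₁)
  exact mul_pos (div_pos (sub_pos.mpr hA) p.hℓ₂) (Real.sqrt_pos.mpr h1)

lemma V_strictAnti (hA : p.B < A) (hα : p.α₃ < p.α₂) : StrictAntiOn (p.V A) (Ioi 0) := by
  intro a ha b hb hab
  have ha' : (0:ℝ) < a := ha
  have hb' : (0:ℝ) < b := hb
  unfold Params.V
  have hd : 0 < p.α₁ / p.α₃ - p.α₁ / p.α₂ := sub_pos.mpr (r_lt_s p hα)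
  have hsq : 0 < Real.sqrt (p.α₁ / p.α₃) := Real.sqrt_pos.mpr (s_pos p)
  have herfa : 0 < erf (a * Real.sqrt (p.α₁ / p.α₃)) := erf_pos (mul_pos ha' hsq)
  have herfab : erf (a * Real.sqrt (p.α₁ / p.α₃)) ≤ erf (b * Real.sqrt (p.α₁ / p.α₃)) :=
    (strictMono_erf (mul_lt_mul_of_pos_right hab hsq)).le
  have hab2 : a^2 < b^2 := by nlinarith
  have hExp : Real.exp (-(b^2) * (p.α₁ / p.α₃ - p.α₁ / p.α₂))
      < Real.exp (-(a^2) * (p.α₁ / p.α₃ - p.α₁ / p.α₂)) := by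
    apply Real.exp_lt_exp.mpr
    nlinarith
  have h1 : Real.exp (-(b^2) * (p.α₁ / p.α₃ - p.α₁ / p.α₂)) / erf (b * Real.sqrt (p.α₁ / p.α₃))
      < Real.exp (-(a^2) * (p.α₁ / p.α₃ - p.α₁ / p.α₂)) / erf (a * Real.sqrt (p.α₁ / p.α₃)) :=
    calc _ ≤ Real.exp (-(b^2) * (p.α₁ / p.α₃ - p.α₁ / p.α₂)) /
            erf (a * Real.sqrt (p.α₁ / p.α₃)) := by gcongr
      _ < _ := div_lt_div_of_pos_right hExp herfa
  have h2 : a * Real.exp (a^2 * (p.α₁ / p.α₂)) < b * Real.exp (b^2 * (p.α₁ / p.α₂)) := by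
    have hE : Real.exp (a^2 * (p.α₁ / p.α₂)) ≤ Real.exp (b^2 * (p.α₁ / p.α₂)) := by
      apply Real.exp_le_exp.mpr
      have := r_pos p
      nlinarith
    nlinarith [Real.exp_pos (a^2 * (p.α₁ / p.α₂)), Real.exp_pos (b^2 * (p.α₁ / p.α₂))]
  have h3 := mul_lt_mul_of_pos_left h1 (Kv_pos p A hA)
  linarith

lemma V_continuousAt {z : ℝ} (hz : 0 < z) : ContinuousAt (p.V A) z := by
  unfold Params.V
  have hsq : 0 < Real.sqrt (p.α₁ / p.α₃) := Real.sqrt_pos.mpr (s_pos p)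
  apply ContinuousAt.sub
  · apply ContinuousAt.mul continuousAt_const
    apply ContinuousAt.div
    · exact (Real.continuous_exp.comp ((continuous_pow 2).neg.mul continuous_const)).continuousAt
    · exact (continuous_erf.comp (continuous_id.mul continuous_const)).continuousAt
    · exact (erf_pos (mul_pos hz hsq)).ne'
  · exact (continuous_id.mul
      (Real.continuous_exp.comp ((continuous_pow 2).mul continuous_const))).continuousAt

lemma V_le (hA : p.B < A) (hα : p.α₃ < p.α₂) {d z : ℝ} (hd : 0 < d) (hdz : d ≤ z) :
    p.V A z ≤ (A - p.B) / p.ℓ₂ * Real.sqrt (p.c₁ * p.c₃ * p.k₃ / (Real.pi * p.k₁)) *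
      (1 / erf (d * Real.sqrt (p.α₁ / p.α₃))) := by
  unfold Params.V
  have hz : 0 < z := lt_of_lt_of_le hd hdz
  have hsq : 0 < Real.sqrt (p.α₁ / p.α₃) := Real.sqrt_pos.mpr (s_pos p)
  have herfd : 0 < erf (d * Real.sqrt (p.α₁ / p.α₃)) := erf_pos (mul_pos hd hsq)
  have hdd : 0 < p.α₁ / p.α₃ - p.α₁ / p.α₂ := sub_pos.mpr (r_lt_s p hα)
  have h1 : Real.exp (-(z^2) * (p.α₁ / p.α₃ - p.α₁ / p.α₂)) ≤ 1 := by
    apply Real.exp_le_one_iff.mpr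
    nlinarith
  have h2 : erf (d * Real.sqrt (p.α₁ / p.α₃)) ≤ erf (z * Real.sqrt (p.α₁ / p.α₃)) :=
    strictMono_erf.monotone (mul_le_mul_of_nonneg_right hdz hsq.le)
  have h3 : Real.exp (-(z^2) * (p.α₁ / p.α₃ - p.α₁ / p.α₂)) / erf (z * Real.sqrt (p.α₁ / p.α₃))
      ≤ 1 / erf (d * Real.sqrt (p.α₁ / p.α₃)) := by gcongr
  have h4 := mul_le_mul_of_nonneg_left h3 (Kv_pos p A hA).le
  have h5 : 0 ≤ z * Real.exp (z^2 * (p.α₁ / p.α₂)) := by positivity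
  linarith

lemma V_big (hA : p.B < A) (hα : p.α₃ < p.α₂) {M : ℝ} (hM : 0 < M) :
    ∃ δ : ℝ, 0 < δ ∧ δ ≤ 1 ∧ ∀ z, 0 < z → z ≤ δ → M < p.V A z := by
  have hKVpos : 0 < (A - p.B) / p.ℓ₂ * Real.sqrt (p.c₁ * p.c₃ * p.k₃ / (Real.pi * p.k₁)) :=
    Kv_pos p A hA
  set KV := (A - p.B) / p.ℓ₂ * Real.sqrt (p.c₁ * p.c₃ * p.k₃ / (Real.pi * p.k₁)) with hKV
  have hd'pos : 0 < p.α₁ / p.α₃ - p.α₁ / p.α₂ := sub_pos.mpr (r_lt_s p hα)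
  set d' := p.α₁ / p.α₃ - p.α₁ / p.α₂ with hd'
  set R := Real.exp (p.α₁ / p.α₂) with hR
  have hRpos : 0 < R := Real.exp_pos _
  have hMR : 0 < M + R := by linarith
  set ε := KV * Real.exp (-d') / (M + R) with hε
  have hεpos : 0 < ε := div_pos (mul_pos hKVpos (Real.exp_pos _)) hMR
  have hss : 0 < Real.sqrt (p.α₁ / p.α₃) := Real.sqrt_pos.mpr (s_pos p)
  have htend : Tendsto (fun z : ℝ => erf (z * Real.sqrt (p.α₁ / p.α₃))) (nhdsWithin 0 (Ioi 0))
      (nhds 0) := by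
    have hcont : Continuous fun z : ℝ => erf (z * Real.sqrt (p.α₁ / p.α₃)) :=
      continuous_erf.comp (continuous_id.mul continuous_const)
    have h := hcont.tendsto 0
    simp only [zero_mul, erf_zero] at h
    exact h.mono_left nhdsWithin_le_nhds
  have hev : ∀ᶠ z in nhdsWithin 0 (Ioi 0), erf (z * Real.sqrt (p.α₁ / p.α₃)) < ε :=
    htend.eventually (eventually_lt_nhds hεpos)
  have hev2 : ∀ᶠ z in nhdsWithin (0:ℝ) (Ioi 0), z < 1 :=
    eventually_nhdsWithin_of_eventually_nhds (eventually_lt_nhds one_pos)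
  have hev3 : ∀ᶠ z in nhdsWithin (0:ℝ) (Ioi 0), z ∈ Ioi (0:ℝ) := eventually_mem_nhdsWithin
  obtain ⟨δ, hδε, hδ1, hδ0⟩ := (hev.and (hev2.and hev3)).exists
  rw [mem_Ioi] at hδ0
  refine ⟨δ, hδ0, hδ1.le, ?_⟩
  intro z hz hzδ
  have hz1 : z ≤ 1 := hzδ.trans hδ1.le
  have herfz : 0 < erf (z * Real.sqrt (p.α₁ / p.α₃)) := erf_pos (mul_pos hz hss)
  have herflt : erf (z * Real.sqrt (p.α₁ / p.α₃)) < ε :=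
    lt_of_le_of_lt (strictMono_erf.monotone (mul_le_mul_of_nonneg_right hzδ hss.le)) hδε
  have t1 : KV * Real.exp (-d') / ε < KV * Real.exp (-d') / erf (z * Real.sqrt (p.α₁ / p.α₃)) :=
    div_lt_div_of_pos_left (mul_pos hKVpos (Real.exp_pos _)) herfz herflt
  have t4 : KV * Real.exp (-d') / ε = M + R := by
    rw [hε, div_div_eq_mul_div,
      mul_div_cancel_left₀ _ (ne_of_gt (mul_pos hKVpos (Real.exp_pos _)))]
  have t2 : KV * Real.exp (-d') / erf (z * Real.sqrt (p.α₁ / p.α₃))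
      ≤ KV * (Real.exp (-(z^2) * d') / erf (z * Real.sqrt (p.α₁ / p.α₃))) := by
    rw [mul_div_assoc]
    gcongr
    nlinarith [mul_nonneg (show (0:ℝ) ≤ 1 - z^2 by nlinarith) hd'pos.le]
  have t3 : z * Real.exp (z^2 * (p.α₁ / p.α₂)) ≤ R := by
    have e1 : Real.exp (z^2 * (p.α₁ / p.α₂)) ≤ R := by
      rw [hR]
      apply Real.exp_le_exp.mpr
      have hrp := r_pos p
      nlinarith [mul_nonneg (show (0:ℝ) ≤ 1 - z^2 by nlinarith) hrp.le]
    nlinarith [Real.exp_pos (z^2 * (p.α₁ / p.α₂))]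
  unfold Params.V
  rw [← hKV, ← hd']
  linarith

end V
end StefanAux


open StefanAux in
/-- existence and uniqueness for the reduced Dirichlet problem:
if `α₂ > α₃` and `A > B`, there is a unique `μ₁ > z₀` with `Q(μ₁) = V(μ₂)`,
where `μ₂ ≥ 0` is the unique number with `erf(μ₂√(α₁/α₂)) = H(μ₁)`. -/
theorem dirichlet_exists_unique (p : Params) (A z₀ : ℝ)
    (hα : p.α₃ < p.α₂) (hA : p.B < A)
    (hz₀ : 0 < z₀ ∧ p.H z₀ = 0) :
    ∃! μ₁ : ℝ, z₀ < μ₁ ∧ ∃ μ₂ : ℝ, 0 ≤ μ₂ ∧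
      erf (μ₂ * Real.sqrt (p.α₁ / p.α₂)) = p.H μ₁ ∧
      p.Q μ₁ = p.V A μ₂ := by
  classical
  obtain ⟨hz₀pos, hz₀H⟩ := hz₀
  have hsr : 0 < Real.sqrt (p.α₁ / p.α₂) := Real.sqrt_pos.mpr (r_pos p)
  have hss : 0 < Real.sqrt (p.α₁ / p.α₃) := Real.sqrt_pos.mpr (s_pos p)
  set g : ℝ → ℝ := fun μ₁ => erfinv (p.H μ₁) / Real.sqrt (p.α₁ / p.α₂) with hgdef
  -- positivity of H beyond z₀
  have hHpos : ∀ μ₁, z₀ < μ₁ → 0 < p.H μ₁ := by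
    intro μ₁ h
    have := H_strictMono p (Set.mem_Ioi.mpr hz₀pos) (Set.mem_Ioi.mpr (hz₀pos.trans h)) h
    rwa [hz₀H] at this
  -- g is a well-defined inverse
  have hg : ∀ μ₁, z₀ < μ₁ → 0 ≤ g μ₁ ∧ erf (g μ₁ * Real.sqrt (p.α₁ / p.α₂)) = p.H μ₁ := by
    intro μ₁ h
    obtain ⟨h0, h1⟩ := erfinv_spec (hHpos μ₁ h).le (H_lt_one p (hz₀pos.trans h).le)
    refine ⟨div_nonneg h0 hsr.le, ?_⟩
    rw [hgdef]
    simp only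
    rw [div_mul_cancel₀ _ hsr.ne', h1]
  have hgpos : ∀ μ₁, z₀ < μ₁ → 0 < g μ₁ := by
    intro μ₁ h
    rcases (hg μ₁ h).1.eq_or_lt with h0 | h0
    · exfalso
      have := (hg μ₁ h).2
      rw [← h0, zero_mul, erf_zero] at this
      exact absurd this.symm (ne_of_gt (hHpos μ₁ h))
    · exact h0
  -- canonical form of the μ₂ constraint
  have huniq : ∀ μ₁, z₀ < μ₁ → ∀ μ₂, 0 ≤ μ₂ →
      erf (μ₂ * Real.sqrt (p.α₁ / p.α₂)) = p.H μ₁ → μ₂ = g μ₁ := by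
    intro μ₁ h μ₂ _ he
    have := strictMono_erf.injective (he.trans (hg μ₁ h).2.symm)
    exact mul_right_cancel₀ hsr.ne' this
  -- strict monotonicity of g
  have hgmono : ∀ a b, z₀ < a → a < b → g a < g b := by
    intro a b ha hab
    have hH : p.H a < p.H b :=
      H_strictMono p (Set.mem_Ioi.mpr (hz₀pos.trans ha))
        (Set.mem_Ioi.mpr (hz₀pos.trans (ha.trans hab))) hab
    have : erf (g a * Real.sqrt (p.α₁ / p.α₂)) < erf (g b * Real.sqrt (p.α₁ / p.α₂)) := by
      rw [(hg a ha).2, (hg b (ha.trans hab)).2]; exact hH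
    have := strictMono_erf.lt_iff_lt.mp this
    exact (mul_lt_mul_iff_left₀ hsr).mp this
  have hgmonoOn : MonotoneOn g (Set.Ioi z₀) := by
    intro a ha b hb hab
    rcases hab.eq_or_lt with h | h
    · rw [h]
    · exact (hgmono a b ha h).le
  -- continuity of g
  have hgcont : ∀ x, z₀ < x → ContinuousAt g x := by
    intro x hx
    apply continuousAt_of_monotoneOn_of_image_mem_nhds hgmonoOn (Ioi_mem_nhds hx)
    have hx'1 : z₀ < (z₀ + x) / 2 := by linarith
    have hx'2 : (z₀ + x) / 2 < x := by linarith
    have hx'' : x < x + 1 := by linarith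
    have hsub : Set.Icc (g ((z₀ + x) / 2)) (g (x + 1)) ⊆ g '' Set.Ioi z₀ := by
      intro y hy
      have hy0 : 0 ≤ y := le_trans (hg _ hx'1).1 hy.1
      have e1 : p.H ((z₀ + x) / 2) ≤ erf (y * Real.sqrt (p.α₁ / p.α₂)) := by
        rw [← (hg _ hx'1).2]
        exact strictMono_erf.monotone (mul_le_mul_of_nonneg_right hy.1 hsr.le)
      have e2 : erf (y * Real.sqrt (p.α₁ / p.α₂)) ≤ p.H (x + 1) := by
        rw [← (hg _ (hx'1.trans (hx'2.trans hx''))).2]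
        exact strictMono_erf.monotone (mul_le_mul_of_nonneg_right hy.2 hsr.le)
      have hHc : ContinuousOn p.H (Set.Icc ((z₀ + x) / 2) (x + 1)) :=
        (H_continuousOn p).mono (fun t ht => le_trans (by linarith) ht.1)
      obtain ⟨w, hw, hHw⟩ := intermediate_value_Icc (by linarith) hHc ⟨e1, e2⟩
      have hwz : z₀ < w := lt_of_lt_of_le hx'1 hw.1
      exact ⟨w, hwz, (huniq w hwz y hy0 hHw.symm).symm⟩
    apply Filter.mem_of_superset _ hsub
    exact Icc_mem_nhds (hgmono _ x hx'1 hx'2) (hgmono x (x + 1) hx hx'')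
  -- the target M and the smallness parameter δ
  have hM : 0 < p.Q (z₀ + 1) := Q_pos p (by linarith)
  obtain ⟨δ, hδ0, hδ1, hδV⟩ := V_big p A hA hα hM
  -- find a close to z₀
  have hεr : 0 < erf (δ * Real.sqrt (p.α₁ / p.α₂)) := erf_pos (mul_pos hδ0 hsr)
  have hHtend : Filter.Tendsto p.H (nhdsWithin z₀ (Set.Ioi z₀)) (nhds 0) := by
    have h1 : Filter.Tendsto p.H (nhdsWithin z₀ (Set.Ici 0)) (nhds 0) := by
      have := (H_continuousOn p) z₀ hz₀pos.le
      rwa [ContinuousWithinAt, hz₀H] at this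
    exact h1.mono_left (nhdsWithin_mono z₀ (fun t ht => (hz₀pos.trans ht).le))
  have hev : ∀ᶠ μ in nhdsWithin z₀ (Set.Ioi z₀),
      p.H μ < erf (δ * Real.sqrt (p.α₁ / p.α₂)) :=
    hHtend.eventually (eventually_lt_nhds hεr)
  have hev2 : ∀ᶠ μ in nhdsWithin z₀ (Set.Ioi z₀), μ < z₀ + 1 :=
    eventually_nhdsWithin_of_eventually_nhds (eventually_lt_nhds (by linarith))
  have hev3 : ∀ᶠ μ in nhdsWithin z₀ (Set.Ioi z₀), μ ∈ Set.Ioi z₀ :=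
    eventually_mem_nhdsWithin
  obtain ⟨a, haH, ha2, ha1⟩ := (hev.and (hev2.and hev3)).exists
  rw [Set.mem_Ioi] at ha1
  -- g a ≤ δ, so V (g a) is large
  have hgaδ : g a < δ := by
    have : erf (g a * Real.sqrt (p.α₁ / p.α₂)) < erf (δ * Real.sqrt (p.α₁ / p.α₂)) := by
      rw [(hg a ha1).2]; exact haH
    exact (mul_lt_mul_iff_left₀ hsr).mp (strictMono_erf.lt_iff_lt.mp this)
  have hFa : p.Q a < p.V A (g a) := by
    have h1 : p.Q a ≤ p.Q (z₀ + 1) :=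
      (Q_strictMono p).monotoneOn (Set.mem_Ici.mpr (by linarith))
        (Set.mem_Ici.mpr (by linarith)) ha2.le
    exact lt_of_le_of_lt h1 (hδV (g a) (hgpos a ha1) hgaδ.le)
  -- find b large
  set M₂ := (A - p.B) / p.ℓ₂ * Real.sqrt (p.c₁ * p.c₃ * p.k₃ / (Real.pi * p.k₁)) *
      (1 / erf (g a * Real.sqrt (p.α₁ / p.α₃))) with hM₂
  set b := max (a + 1) ((M₂ + 1) * (p.ℓ₂ / p.ℓ₁)) with hbdef
  have hb1 : a < b := lt_of_lt_of_le (lt_add_one a) (le_max_left _ _)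
  have hbz : z₀ < b := ha1.trans hb1
  have hFb : p.V A (g b) < p.Q b := by
    have hVb : p.V A (g b) ≤ M₂ :=
      V_le p A hA hα (hgpos a ha1) (hgmonoOn (Set.mem_Ioi.mpr ha1)
        (Set.mem_Ioi.mpr hbz) hb1.le)
    have h1 := Q_ge p (show (0:ℝ) ≤ b by linarith)
    have h2 : (M₂ + 1) * (p.ℓ₂ / p.ℓ₁) ≤ b := le_max_right _ _
    have hl : 0 < p.ℓ₁ / p.ℓ₂ := div_pos p.hℓ₁ p.hℓ₂
    have h3 : p.ℓ₁ / p.ℓ₂ * ((M₂ + 1) * (p.ℓ₂ / p.ℓ₁)) = M₂ + 1 := by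
      have hgen : ∀ m : ℝ, p.ℓ₁ / p.ℓ₂ * ((m + 1) * (p.ℓ₂ / p.ℓ₁)) = m + 1 := by
        intro m
        have h₁ := p.hℓ₁.ne'
        have h₂ := p.hℓ₂.ne'
        field_simp
      exact hgen M₂
    have h4 := mul_le_mul_of_nonneg_left h2 hl.le
    rw [h3] at h4
    linarith
  -- IVT
  set F : ℝ → ℝ := fun μ => p.Q μ - p.V A (g μ) with hFdef
  have hFcont : ContinuousOn F (Set.Icc a b) := by
    intro x hx
    have hxz : z₀ < x := lt_of_lt_of_le ha1 hx.1
    exact (((Q_continuous p).continuousAt).sub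
      ((V_continuousAt p A (hgpos x hxz)).comp (hgcont x hxz))).continuousWithinAt
  have h0mem : (0:ℝ) ∈ Set.Icc (F a) (F b) := by
    constructor
    · simp only [hFdef]; linarith
    · simp only [hFdef]; linarith
  obtain ⟨c, hc, hFc⟩ := intermediate_value_Icc hb1.le hFcont h0mem
  have hcz : z₀ < c := lt_of_lt_of_le ha1 hc.1
  have hQV : p.Q c = p.V A (g c) := by
    have : p.Q c - p.V A (g c) = 0 := hFc
    linarith
  -- strict monotonicity of F for uniqueness
  have hFmono : ∀ u v, z₀ < u → u < v → F u < F v := by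
    intro u v hu huv
    have hQ : p.Q u < p.Q v :=
      Q_strictMono p (Set.mem_Ici.mpr (by linarith)) (Set.mem_Ici.mpr (by linarith)) huv
    have hV : p.V A (g v) < p.V A (g u) :=
      V_strictAnti p A hA hα (Set.mem_Ioi.mpr (hgpos u hu))
        (Set.mem_Ioi.mpr (hgpos v (hu.trans huv))) (hgmono u v hu huv)
    simp only [hFdef]
    linarith
  refine ⟨c, ⟨hcz, g c, (hg c hcz).1, (hg c hcz).2, hQV⟩, ?_⟩
  rintro y ⟨hy1, μ₂, hμ₂0, hμ₂e, hμ₂Q⟩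
  have hμ₂g : μ₂ = g y := huniq y hy1 μ₂ hμ₂0 hμ₂e
  have hFy : F y = 0 := by
    simp only [hFdef]
    rw [← hμ₂g]
    linarith
  rcases lt_trichotomy y c with h | h | h
  · exfalso
    have := hFmono y c hy1 h
    rw [hFy, hFc] at this
    exact lt_irrefl 0 this
  · exact h
  · exfalso
    have := hFmono c y hcz h
    rw [hFy, hFc] at this
    exact lt_irrefl 0 this
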